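/- If f : (t₀,T) × ℝⁿ → ℝⁿ is continuous, K ⊂ ℝⁿ is closed and convex, and x : [t₀,T) → ℝⁿ is C¹ with x(t₀) ∈ K and f(t, y) ∈ T_K(y) (the tangent cone of the convex set K) whenever y ∈ K, and ẋ(t) = f(t, x(t)), then under a Lipschitz condition on f in x, x(t) ∈ K for all t ∈ [t₀,T). (Nagumo/invariance theorem for convex sets.) -/

import Mathlib

open Set Pointwise

/-- The tangent cone of a convex set `K` at `y`:
the closure of `⋃_{λ > 0} λ(K - y)`. -/
def convexTangentCone {n : ℕ} (K : Set (EuclideanSpace ℝ (Fin n)))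
    (y : EuclideanSpace ℝ (Fin n)) : Set (EuclideanSpace ℝ (Fin n)) :=
  closure (⋃ lam ∈ Set.Ioi (0:ℝ), lam • ((· - y) '' K))

/-- Nagumo/invariance theorem for convex sets: if `f` is continuous, Lipschitz in `x`,
`K` is closed and convex, `f(t,y) ∈ T_K(y)` for `y ∈ K`, and `x` is a `C¹` solution of
`ẋ = f(t,x)` on `[t₀,T)` with `x(t₀) ∈ K`, then `x(t) ∈ K` for all `t ∈ [t₀,T)`. -/
theorem stmt18 {n : ℕ} (t₀ T : ℝ)
    (f : ℝ → EuclideanSpace ℝ (Fin n) → EuclideanSpace ℝ (Fin n))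
    (hf : Continuous fun p : ℝ × EuclideanSpace ℝ (Fin n) => f p.1 p.2)
    (L : NNReal) (hL : ∀ t, LipschitzWith L (f t))
    (K : Set (EuclideanSpace ℝ (Fin n))) (hKc : IsClosed K) (hKconv : Convex ℝ K)
    (htan : ∀ t ∈ Set.Ico t₀ T, ∀ y ∈ K, f t y ∈ convexTangentCone K y)
    (x : ℝ → EuclideanSpace ℝ (Fin n))
    (hx : ∀ t ∈ Set.Ico t₀ T, HasDerivAt x (f t (x t)) t)
    (hx0 : x t₀ ∈ K) :
    ∀ t ∈ Set.Ico t₀ T, x t ∈ K := by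
  intro t ht
  obtain ⟨ht0, htT⟩ := ht
  have hKne : K.Nonempty := ⟨x t₀, hx0⟩
  set g : ℝ → ℝ := fun u => Metric.infDist (x u) K with hg
  have hsub : Icc t₀ t ⊆ Ico t₀ T := fun s hs => ⟨hs.1, lt_of_le_of_lt hs.2 htT⟩
  have hxc : ContinuousOn x (Icc t₀ t) := fun s hs =>
    ((hx s (hsub hs)).continuousAt).continuousWithinAt
  have hgc : ContinuousOn g (Icc t₀ t) :=
    (Metric.continuous_infDist_pt K).comp_continuousOn hxc
  have key : ∀ s ∈ Ico t₀ t, ∀ r, (L : ℝ) * g s < r →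
      ∃ᶠ u in nhdsWithin s (Set.Ioi s), (u - s)⁻¹ * (g u - g s) < r := by
    intro s hs r hr
    have hsT : s ∈ Ico t₀ T := ⟨hs.1, hs.2.trans htT⟩
    obtain ⟨y, hyK, hyd⟩ := hKc.exists_infDist_eq_dist hKne (x s)
    set ε := (r - (L : ℝ) * g s) / 3 with hεdef
    have hε0 : 0 < ε := by
      have : 0 < r - (L : ℝ) * g s := sub_pos.2 hr
      positivity
    have hv := htan s hsT y hyK
    rw [convexTangentCone] at hv
    obtain ⟨w, hw, hwd⟩ := Metric.mem_closure_iff.1 hv ε hε0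
    simp only [Set.mem_iUnion, Set.mem_smul_set, Set.mem_image] at hw
    obtain ⟨lam, hlam, _, ⟨z, hzK, rfl⟩, rfl⟩ := hw
    have hlam0 : (0:ℝ) < lam := hlam
    -- little-o estimate from the derivative
    have hlit := hasDerivAt_iff_isLittleO.1 (hx s hsT)
    have hev1 : ∀ᶠ u in nhdsWithin s (Set.Ioi s),
        ‖x u - x s - (u - s) • f s (x s)‖ ≤ ε * ‖u - s‖ :=
      Filter.Eventually.filter_mono nhdsWithin_le_nhds (hlit.def hε0)
    have hev2 : ∀ᶠ u in nhdsWithin s (Set.Ioi s), u ∈ Set.Ioc s (s + lam⁻¹) :=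
      Filter.eventually_of_mem (Ioc_mem_nhdsGT (by linarith [inv_pos.2 hlam0]))
        (fun u hu => hu)
    refine ((hev1.and hev2).mono ?_).frequently
    rintro u ⟨hub, hu1, hu2⟩
    set c := u - s with hc
    have hc0 : 0 < c := sub_pos.2 hu1
    have hθ1 : c * lam ≤ 1 := by
      rw [← le_div_iff₀ hlam0, div_eq_inv_mul, mul_one]
      simpa [hc] using sub_le_sub_right hu2 s
    have hθ0 : 0 ≤ c * lam := le_of_lt (mul_pos hc0 hlam0)
    -- the point y + c • (lam • (z - y)) lies in K
    have hpK : y + c • (lam • (z - y)) ∈ K := by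
      have := hKconv hyK hzK (by linarith : (0:ℝ) ≤ 1 - c * lam) hθ0 (by ring)
      convert this using 1
      module
    have hgu : g u ≤ dist (x u) (y + c • (lam • (z - y))) :=
      Metric.infDist_le_dist_of_mem hpK
    have hxsy : dist (x s) y = g s := hyd.symm
    have hLb : ‖f s (x s) - f s y‖ ≤ (L : ℝ) * g s := by
      have := (hL s).dist_le_mul (x s) y
      rw [hxsy] at this
      simpa [dist_eq_norm] using this
    have hwb : ‖f s y - lam • (z - y)‖ < ε := by
      simpa [dist_eq_norm] using hwd
    have hdecomp : x u - (y + c • (lam • (z - y)))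
        = (x u - x s - c • f s (x s)) + (x s - y)
          + c • (f s (x s) - f s y) + c • (f s y - lam • (z - y)) := by
      module
    have hnorm : dist (x u) (y + c • (lam • (z - y))) ≤ ε * c + g s
        + c * ((L : ℝ) * g s) + c * ε := by
      rw [dist_eq_norm, hdecomp]
      have h1 : ‖x u - x s - c • f s (x s)‖ ≤ ε * c := by
        have := hub
        rwa [Real.norm_eq_abs, abs_of_pos hc0] at this
      have h2 : ‖x s - y‖ = g s := by rw [← dist_eq_norm]; exact hxsy
      have h3 : ‖c • (f s (x s) - f s y)‖ ≤ c * ((L : ℝ) * g s) := by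
        rw [norm_smul, Real.norm_eq_abs, abs_of_pos hc0]
        exact mul_le_mul_of_nonneg_left hLb hc0.le
      have h4 : ‖c • (f s y - lam • (z - y))‖ ≤ c * ε := by
        rw [norm_smul, Real.norm_eq_abs, abs_of_pos hc0]
        exact mul_le_mul_of_nonneg_left hwb.le hc0.le
      calc ‖(x u - x s - c • f s (x s)) + (x s - y)
          + c • (f s (x s) - f s y) + c • (f s y - lam • (z - y))‖
          ≤ ‖(x u - x s - c • f s (x s)) + (x s - y) + c • (f s (x s) - f s y)‖
            + ‖c • (f s y - lam • (z - y))‖ := norm_add_le _ _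
        _ ≤ (‖(x u - x s - c • f s (x s)) + (x s - y)‖ + ‖c • (f s (x s) - f s y)‖)
            + ‖c • (f s y - lam • (z - y))‖ := by
            gcongr; exact norm_add_le _ _
        _ ≤ ((‖x u - x s - c • f s (x s)‖ + ‖x s - y‖) + ‖c • (f s (x s) - f s y)‖)
            + ‖c • (f s y - lam • (z - y))‖ := by
            gcongr; exact norm_add_le _ _
        _ ≤ ε * c + g s + c * ((L : ℝ) * g s) + c * ε := by
            rw [h2]; gcongr
    have hfin : g u - g s < c * r := by
      have : g u - g s ≤ c * ((L : ℝ) * g s + 2 * ε) := by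
        have := hgu.trans hnorm
        nlinarith
      have h2 : c * ((L : ℝ) * g s + 2 * ε) < c * r := by
        apply mul_lt_mul_of_pos_left _ hc0
        rw [hεdef]; linarith
      linarith
    calc (u - s)⁻¹ * (g u - g s) < (u - s)⁻¹ * (c * r) := by
          apply mul_lt_mul_of_pos_left hfin (inv_pos.2 hc0)
      _ = r := by rw [← hc, ← mul_assoc, inv_mul_cancel₀ hc0.ne', one_mul]
  have hG := le_gronwallBound_of_liminf_deriv_right_le (δ := 0) (ε := 0) hgc key
    (by simp [hg, Metric.infDist_zero_of_mem hx0])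
    (fun s _ => by simp : ∀ s ∈ Ico t₀ t, (L : ℝ) * g s ≤ (L : ℝ) * g s + 0)
    t ⟨ht0, le_rfl⟩
  rw [gronwallBound_ε0_δ0] at hG
  have : g t = 0 := le_antisymm hG Metric.infDist_nonneg
  exact (hKc.mem_iff_infDist_zero hKne).2 this
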